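/- Let Ω⊆R^n be open and F : Ω × (R^N⊗S(n)) → R^N a Carathéodory map satisfying the K-condition: there exist a rank-one positive A∈S(N×n), constants β,γ>0 with β+γ<1, and α with α,1/α∈L^∞(Ω), α>0 a.e., such that |A:Z − α(x)(F(x,X+Z)−F(x,X))|² ≤ βν(A)²|Z|² + γ|A:Z|² for all X,Z and a.e. x. Then F satisfies Definition-1 ellipticity with the same A, the same α, and constants λ = (1−γ)/2 > κ = β/2 > 0; moreover F(x,·) is Lipschitz on R^N⊗S(n) with Lipschitz constant at most ‖1/α‖_{L^∞(Ω)}((1+√γ)|A| + √β ν(A)). -/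

import Mathlib

open Finset MeasureTheory

/-- Tensors in `ℝ^N ⊗ ℝ^{n×n}` (hessian-type arguments). -/
abbrev Tens (N n : ℕ) := Fin N → Fin n → Fin n → ℝ

/-- The contraction `A:Z ∈ ℝ^N`, `(A:Z)_α = A_{αβij} Z_{βij}`. -/
def contA {N n : ℕ} (A : Fin N → Fin N → Fin n → Fin n → ℝ) (Z : Tens N n) : Fin N → ℝ :=
  fun α => ∑ β, ∑ i, ∑ j, A α β i j * Z β i j

/-- Squared Euclidean norm on `ℝ^N`. -/
def vnorm2 {N : ℕ} (v : Fin N → ℝ) : ℝ := ∑ α, (v α) ^ 2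

/-- Squared Frobenius norm on tensors. -/
def tnorm2 {N n : ℕ} (Z : Tens N n) : ℝ := ∑ α, ∑ i, ∑ j, (Z α i j) ^ 2

/-- Frobenius norm of a fourth-order tensor. -/
noncomputable def Anorm {N n : ℕ} (A : Fin N → Fin N → Fin n → Fin n → ℝ) : ℝ :=
  Real.sqrt (∑ α, ∑ β, ∑ i, ∑ j, (A α β i j) ^ 2)

lemma vnorm2_nonneg {N : ℕ} (v : Fin N → ℝ) : 0 ≤ vnorm2 v :=
  Finset.sum_nonneg fun _ _ => sq_nonneg _

lemma tnorm2_nonneg {N n : ℕ} (Z : Tens N n) : 0 ≤ tnorm2 Z :=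
  Finset.sum_nonneg fun _ _ => Finset.sum_nonneg fun _ _ =>
    Finset.sum_nonneg fun _ _ => sq_nonneg _

lemma triple_flat {N n : ℕ} (f : Fin N → Fin n → Fin n → ℝ) :
    ∑ β, ∑ i, ∑ j, f β i j = ∑ p : Fin N × Fin n × Fin n, f p.1 p.2.1 p.2.2 := by
  rw [Fintype.sum_prod_type]
  exact Finset.sum_congr rfl fun β _ =>
    (Fintype.sum_prod_type (f := fun (p : Fin n × Fin n) => f β p.1 p.2)).symm

/-- Cauchy–Schwarz for vectors. -/
lemma sum_mul_le_sqrt {N : ℕ} (u v : Fin N → ℝ) :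
    ∑ γ, u γ * v γ ≤ Real.sqrt (vnorm2 u) * Real.sqrt (vnorm2 v) := by
  have h := Finset.sum_mul_sq_le_sq_mul_sq Finset.univ u v
  calc ∑ γ, u γ * v γ ≤ |∑ γ, u γ * v γ| := le_abs_self _
    _ = Real.sqrt ((∑ γ, u γ * v γ) ^ 2) := (Real.sqrt_sq_eq_abs _).symm
    _ ≤ Real.sqrt (vnorm2 u * vnorm2 v) := Real.sqrt_le_sqrt h
    _ = _ := Real.sqrt_mul (vnorm2_nonneg u) _

lemma sqrt_vnorm2_add_le {N : ℕ} (u v : Fin N → ℝ) :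
    Real.sqrt (vnorm2 (fun γ => u γ + v γ)) ≤
      Real.sqrt (vnorm2 u) + Real.sqrt (vnorm2 v) := by
  have h1 : vnorm2 (fun γ => u γ + v γ) =
      vnorm2 u + 2 * (∑ γ, u γ * v γ) + vnorm2 v := by
    simp only [vnorm2, ← Finset.sum_add_distrib, Finset.mul_sum]
    exact Finset.sum_congr rfl fun γ _ => by ring
  have h2 : vnorm2 (fun γ => u γ + v γ) ≤
      (Real.sqrt (vnorm2 u) + Real.sqrt (vnorm2 v)) ^ 2 := by
    rw [h1, add_sq, Real.sq_sqrt (vnorm2_nonneg u), Real.sq_sqrt (vnorm2_nonneg v)]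
    have := sum_mul_le_sqrt u v
    nlinarith
  calc Real.sqrt (vnorm2 (fun γ => u γ + v γ))
      ≤ Real.sqrt ((Real.sqrt (vnorm2 u) + Real.sqrt (vnorm2 v)) ^ 2) := Real.sqrt_le_sqrt h2
    _ = _ := Real.sqrt_sq (by positivity)

/-- polarization -/
lemma polar {N : ℕ} (v w : Fin N → ℝ) :
    ∑ γ, v γ * w γ =
      (vnorm2 v + vnorm2 w - vnorm2 (fun γ => v γ - w γ)) / 2 := by
  simp only [vnorm2, ← Finset.sum_add_distrib, ← Finset.sum_sub_distrib, Finset.sum_div]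
  exact Finset.sum_congr rfl fun γ _ => by ring

/-- `|A:Z| ≤ |A| √(|Z|²)`. -/
lemma contA_le {N n : ℕ} (A : Fin N → Fin N → Fin n → Fin n → ℝ) (Z : Tens N n) :
    Real.sqrt (vnorm2 (contA A Z)) ≤ Anorm A * Real.sqrt (tnorm2 Z) := by
  have hA : 0 ≤ ∑ α, ∑ β, ∑ i, ∑ j, (A α β i j) ^ 2 :=
    Finset.sum_nonneg fun _ _ => Finset.sum_nonneg fun _ _ =>
      Finset.sum_nonneg fun _ _ => Finset.sum_nonneg fun _ _ => sq_nonneg _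
  have key : vnorm2 (contA A Z) ≤ (∑ α, ∑ β, ∑ i, ∑ j, (A α β i j) ^ 2) * tnorm2 Z := by
    rw [vnorm2, Finset.sum_mul]
    refine Finset.sum_le_sum fun α _ => ?_
    have : contA A Z α = ∑ p : Fin N × Fin n × Fin n,
        A α p.1 p.2.1 p.2.2 * Z p.1 p.2.1 p.2.2 := by
      rw [contA, triple_flat (fun β i j => A α β i j * Z β i j)]
    rw [this]
    calc (∑ p : Fin N × Fin n × Fin n, A α p.1 p.2.1 p.2.2 * Z p.1 p.2.1 p.2.2) ^ 2
        ≤ (∑ p : Fin N × Fin n × Fin n, (A α p.1 p.2.1 p.2.2) ^ 2) *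
          (∑ p : Fin N × Fin n × Fin n, (Z p.1 p.2.1 p.2.2) ^ 2) :=
          Finset.sum_mul_sq_le_sq_mul_sq _ _ _
      _ = (∑ β, ∑ i, ∑ j, (A α β i j) ^ 2) * tnorm2 Z := by
          rw [← triple_flat (fun β i j => (A α β i j) ^ 2),
            ← triple_flat (fun β i j => (Z β i j) ^ 2)]; rfl
  calc Real.sqrt (vnorm2 (contA A Z))
      ≤ Real.sqrt ((∑ α, ∑ β, ∑ i, ∑ j, (A α β i j) ^ 2) * tnorm2 Z) := Real.sqrt_le_sqrt key
    _ = Anorm A * Real.sqrt (tnorm2 Z) := Real.sqrt_mul hA _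

lemma sqrt_add_le' (a b : ℝ) (ha : 0 ≤ a) (hb : 0 ≤ b) :
    Real.sqrt (a + b) ≤ Real.sqrt a + Real.sqrt b := by
  rw [show a + b = Real.sqrt a ^ 2 + Real.sqrt b ^ 2 by
    rw [Real.sq_sqrt ha, Real.sq_sqrt hb]]
  calc Real.sqrt (Real.sqrt a ^ 2 + Real.sqrt b ^ 2)
      ≤ Real.sqrt ((Real.sqrt a + Real.sqrt b) ^ 2) := by
        apply Real.sqrt_le_sqrt; nlinarith [Real.sqrt_nonneg a, Real.sqrt_nonneg b]
    _ = _ := Real.sqrt_sq (by positivity)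

/-- K-condition ⇒ Definition 1 ellipticity + Lipschitz continuity:
if `F` satisfies the K-condition with data `(A, ν(A), α, β, γ)`, `β + γ < 1`, then `F`
satisfies Definition 1 ellipticity with the same `A`, `α` and constants `λ = (1−γ)/2`,
`κ = β/2`, and `F(x,·)` is Lipschitz with constant `‖1/α‖_∞((1+√γ)|A| + √β ν(A))`. -/
theorem stmt6 {n N : ℕ} (Ω : Set (Fin n → ℝ)) (hΩ : IsOpen Ω)
    (F : (Fin n → ℝ) → Tens N n → Fin N → ℝ)
    (hFmeas : ∀ X : Tens N n, Measurable fun x => F x X)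
    (hFcont : ∀ᵐ x ∂(volume.restrict Ω), Continuous fun X => F x X)
    (A : Fin N → Fin N → Fin n → Fin n → ℝ)
    (hsymm : ∀ α β i j, A α β i j = A β α j i) (ν : ℝ) (hν : 0 < ν)
    (hrank1 : ∀ (η : Fin N → ℝ) (a : Fin n → ℝ),
      ∑ α, ∑ β, ∑ i, ∑ j, A α β i j * η α * a i * η β * a j ≥
        ν * (∑ α, (η α) ^ 2) * (∑ i, (a i) ^ 2))
    (be ga : ℝ) (hbe : 0 < be) (hga : 0 < ga) (hbega : be + ga < 1)
    (al : (Fin n → ℝ) → ℝ)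
    (hal : MemLp al ⊤ (volume.restrict Ω))
    (halpos : ∀ᵐ x ∂(volume.restrict Ω), 0 < al x)
    (halinv : MemLp (fun x => (al x)⁻¹) ⊤ (volume.restrict Ω))
    (hK : ∀ᵐ x ∂(volume.restrict Ω), ∀ X Z : Tens N n,
      vnorm2 (fun γ => contA A Z γ - al x * (F x (X + Z) γ - F x X γ)) ≤
        be * ν ^ 2 * tnorm2 Z + ga * vnorm2 (contA A Z)) :
    (∀ᵐ x ∂(volume.restrict Ω), ∀ X Z : Tens N n,
      ∑ γ, contA A Z γ * (F x (X + Z) γ - F x X γ) ≥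
        ((1 - ga) / 2) / al x * vnorm2 (contA A Z) - (be / 2) / al x * ν ^ 2 * tnorm2 Z) ∧
    (∀ᵐ x ∂(volume.restrict Ω), ∀ X Y : Tens N n,
      Real.sqrt (vnorm2 (fun γ => F x Y γ - F x X γ)) ≤
        (eLpNorm (fun x => (al x)⁻¹) ⊤ (volume.restrict Ω)).toReal *
          ((1 + Real.sqrt ga) * Anorm A + Real.sqrt be * ν) *
            Real.sqrt (tnorm2 (Y - X))) := by
  constructor
  · -- ellipticity
    filter_upwards [hK, halpos] with x hKx hax
    intro X Z
    set v : Fin N → ℝ := contA A Z with hv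
    set d : Fin N → ℝ := fun γ => F x (X + Z) γ - F x X γ with hd
    set w : Fin N → ℝ := fun γ => al x * d γ with hw
    have hvw : vnorm2 (fun γ => v γ - w γ) ≤ be * ν ^ 2 * tnorm2 Z + ga * vnorm2 v :=
      hKx X Z
    have hsum : (1 - ga) / 2 * vnorm2 v - be / 2 * ν ^ 2 * tnorm2 Z ≤ ∑ γ, v γ * w γ := by
      rw [polar v w]
      nlinarith [vnorm2_nonneg w]
    have key : (∑ γ, v γ * d γ) * al x = ∑ γ, v γ * w γ := by
      rw [Finset.sum_mul]
      exact Finset.sum_congr rfl fun γ _ => by simp [hw]; ring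
    have hL : ((1 - ga) / 2) / al x * vnorm2 v - (be / 2) / al x * ν ^ 2 * tnorm2 Z =
        ((1 - ga) / 2 * vnorm2 v - be / 2 * ν ^ 2 * tnorm2 Z) / al x := by
      field_simp
    rw [ge_iff_le, hL, div_le_iff₀ hax, key]
    exact hsum
  · -- Lipschitz
    have hfin : eLpNormEssSup (fun x => (al x)⁻¹) (volume.restrict Ω) ≠ ⊤ := by
      have := halinv.2
      rw [eLpNorm_exponent_top] at this
      exact this.ne
    filter_upwards [hK, halpos,
      ae_le_eLpNormEssSup (f := fun x => (al x)⁻¹) (μ := volume.restrict Ω)] with x hKx hax hbx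
    intro X Y
    set c := (eLpNorm (fun x => (al x)⁻¹) ⊤ (volume.restrict Ω)).toReal with hc
    have hcb : (al x)⁻¹ ≤ c := by
      have h1 : ‖(al x)⁻¹‖ ≤ c := by
        rw [hc, eLpNorm_exponent_top]
        have := ENNReal.toReal_mono hfin hbx
        simpa using this
      calc (al x)⁻¹ ≤ ‖(al x)⁻¹‖ := le_abs_self _
        _ ≤ c := h1
    set Z : Tens N n := Y - X with hZ
    set d : Fin N → ℝ := fun γ => F x Y γ - F x X γ with hd
    set w : Fin N → ℝ := fun γ => al x * d γ with hw
    set v : Fin N → ℝ := contA A Z with hv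
    have hXZ : X + Z = Y := by rw [hZ]; abel
    have hvw : vnorm2 (fun γ => v γ - w γ) ≤ be * ν ^ 2 * tnorm2 Z + ga * vnorm2 v := by
      have := hKx X Z
      rw [hXZ] at this
      exact this
    set sv := Real.sqrt (vnorm2 v) with hsv
    set sZ := Real.sqrt (tnorm2 Z) with hsZ
    -- sqrt of the K-bound
    have hstep2 : Real.sqrt (vnorm2 (fun γ => v γ - w γ)) ≤
        Real.sqrt be * ν * sZ + Real.sqrt ga * sv := by
      calc Real.sqrt (vnorm2 (fun γ => v γ - w γ))
          ≤ Real.sqrt (be * ν ^ 2 * tnorm2 Z + ga * vnorm2 v) := Real.sqrt_le_sqrt hvw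
        _ ≤ Real.sqrt (be * ν ^ 2 * tnorm2 Z) + Real.sqrt (ga * vnorm2 v) :=
            sqrt_add_le' _ _ (mul_nonneg (by positivity) (tnorm2_nonneg Z)) (mul_nonneg hga.le (vnorm2_nonneg v))
        _ = Real.sqrt be * ν * sZ + Real.sqrt ga * sv := by
            rw [Real.sqrt_mul (by positivity : (0:ℝ) ≤ be * ν ^ 2),
              Real.sqrt_mul hbe.le, Real.sqrt_sq hν.le, Real.sqrt_mul hga.le]
    have hwtri : Real.sqrt (vnorm2 w) ≤ sv + Real.sqrt (vnorm2 (fun γ => v γ - w γ)) := by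
      have heq : w = fun γ => v γ + (w γ - v γ) := by funext γ; ring
      have h2 : vnorm2 (fun γ => w γ - v γ) = vnorm2 (fun γ => v γ - w γ) := by
        unfold vnorm2
        exact Finset.sum_congr rfl fun γ _ => by ring
      calc Real.sqrt (vnorm2 w) = Real.sqrt (vnorm2 (fun γ => v γ + (w γ - v γ))) := by
            rw [← heq]
        _ ≤ sv + Real.sqrt (vnorm2 (fun γ => w γ - v γ)) := sqrt_vnorm2_add_le _ _
        _ = sv + Real.sqrt (vnorm2 (fun γ => v γ - w γ)) := by rw [h2]
    have hAb : sv ≤ Anorm A * sZ := contA_le A Z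
    set L := (1 + Real.sqrt ga) * Anorm A + Real.sqrt be * ν with hLdef
    have hLpos : 0 ≤ L := by
      have h1 : 0 ≤ Anorm A := Real.sqrt_nonneg _
      positivity
    have hsZnn : 0 ≤ sZ := Real.sqrt_nonneg _
    have hwbd : Real.sqrt (vnorm2 w) ≤ L * sZ := by
      have hga1 : (0:ℝ) ≤ 1 + Real.sqrt ga := by positivity
      calc Real.sqrt (vnorm2 w) ≤ sv + (Real.sqrt be * ν * sZ + Real.sqrt ga * sv) :=
            hwtri.trans (by linarith)
        _ = (1 + Real.sqrt ga) * sv + Real.sqrt be * ν * sZ := by ring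
        _ ≤ (1 + Real.sqrt ga) * (Anorm A * sZ) + Real.sqrt be * ν * sZ := by
            gcongr
        _ = L * sZ := by ring
    have hwd : Real.sqrt (vnorm2 w) = al x * Real.sqrt (vnorm2 d) := by
      have : vnorm2 w = (al x) ^ 2 * vnorm2 d := by
        unfold vnorm2
        rw [Finset.mul_sum]
        exact Finset.sum_congr rfl fun γ _ => by simp [hw]; ring
      rw [this, Real.sqrt_mul (sq_nonneg _), Real.sqrt_sq hax.le]
    have hdbd : Real.sqrt (vnorm2 d) ≤ (al x)⁻¹ * (L * sZ) := by
      rw [← mul_le_mul_iff_right₀ hax, ← hwd]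
      calc Real.sqrt (vnorm2 w) ≤ L * sZ := hwbd
        _ = al x * ((al x)⁻¹ * (L * sZ)) := by field_simp
    calc Real.sqrt (vnorm2 d) ≤ (al x)⁻¹ * (L * sZ) := hdbd
      _ ≤ c * (L * sZ) := by
          apply mul_le_mul_of_nonneg_right hcb (by positivity)
      _ = c * L * sZ := by ring
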